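/- Let p be an odd prime and let n, d be integers satisfying 2d + 2 ≤ n ≤ 3d and such that no integer i with n − 2d ≤ i < d divides d. Let H = H_1(𝔽_{p^d}) and let N be a subgroup of Z(H) with [H : N] = p^n. If F is a finite field of characteristic p, m ≥ 1, and there exists a surjective group homomorphism from H_m(F) onto H/N, then m = 1 and |F| = p^d (so H_m(F) is isomorphic to H). -/

import Mathlib

set_option linter.unusedSectionVars false

/-- The generalized Heisenberg group `H_m(K)`: underlying set `K^m × K^m × K` with
multiplication `(u,v,s)·(u',v',s') = (u+u', v+v', s+s'+u·v')`. -/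
structure Heisenberg (K : Type*) (m : ℕ) where
  x : Fin m → K
  y : Fin m → K
  z : K

namespace Heisenberg

variable {K : Type*} [Field K] {m : ℕ}

@[ext] lemma ext' {a b : Heisenberg K m} (hx : a.x = b.x) (hy : a.y = b.y) (hz : a.z = b.z) :
    a = b := by cases a; cases b; simp_all

instance : Mul (Heisenberg K m) :=
  ⟨fun a b => ⟨a.x + b.x, a.y + b.y, a.z + b.z + dotProduct a.x b.y⟩⟩

instance : One (Heisenberg K m) := ⟨⟨0, 0, 0⟩⟩

instance : Inv (Heisenberg K m) :=
  ⟨fun a => ⟨-a.x, -a.y, -a.z + dotProduct a.x a.y⟩⟩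

@[simp] lemma mul_x (a b : Heisenberg K m) : (a * b).x = a.x + b.x := rfl
@[simp] lemma mul_y (a b : Heisenberg K m) : (a * b).y = a.y + b.y := rfl
@[simp] lemma mul_z (a b : Heisenberg K m) :
    (a * b).z = a.z + b.z + dotProduct a.x b.y := rfl
@[simp] lemma one_x : (1 : Heisenberg K m).x = 0 := rfl
@[simp] lemma one_y : (1 : Heisenberg K m).y = 0 := rfl
@[simp] lemma one_z : (1 : Heisenberg K m).z = 0 := rfl
@[simp] lemma inv_x (a : Heisenberg K m) : a⁻¹.x = -a.x := rfl
@[simp] lemma inv_y (a : Heisenberg K m) : a⁻¹.y = -a.y := rfl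
@[simp] lemma inv_z (a : Heisenberg K m) : a⁻¹.z = -a.z + dotProduct a.x a.y := rfl

instance instGroup : Group (Heisenberg K m) where
  mul_assoc a b c := by
    ext <;> simp [add_dotProduct, dotProduct_add] <;> ring
  one_mul a := by ext <;> simp
  mul_one a := by ext <;> simp
  inv_mul_cancel a := by
    ext <;> simp [neg_dotProduct]

end Heisenberg

open scoped commutatorElement

section Aux

namespace Heisenberg

variable {K : Type*} [Field K] {m : ℕ}

/-- Projection onto the `(x, y)` coordinates, as a monoid hom to the additive group. -/
def proj (K : Type*) [Field K] (m : ℕ) :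
    Heisenberg K m →* Multiplicative ((Fin m → K) × (Fin m → K)) where
  toFun a := Multiplicative.ofAdd (a.x, a.y)
  map_one' := rfl
  map_mul' _ _ := rfl

lemma proj_surjective (K : Type*) [Field K] (m : ℕ) : Function.Surjective (proj K m) :=
  fun t => ⟨⟨t.toAdd.1, t.toAdd.2, 0⟩, rfl⟩

lemma mem_ker_proj {a : Heisenberg K m} :
    a ∈ (proj K m).ker ↔ a.x = 0 ∧ a.y = 0 := by
  rw [MonoidHom.mem_ker]
  constructor
  · intro h
    have h1 : (Multiplicative.toAdd (proj K m a)) =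
        (Multiplicative.toAdd (1 : Multiplicative ((Fin m → K) × (Fin m → K)))) := by rw [h]
    exact ⟨congrArg Prod.fst h1, congrArg Prod.snd h1⟩
  · rintro ⟨h1, h2⟩
    show Multiplicative.ofAdd (a.x, a.y) = 1
    rw [h1, h2]; rfl

lemma commutator_eq (a b : Heisenberg K m) :
    ⁅a, b⁆ = ⟨0, 0, dotProduct a.x b.y - dotProduct b.x a.y⟩ := by
  show a * b * a⁻¹ * b⁻¹ = _
  ext <;>
    simp [add_dotProduct, neg_dotProduct, dotProduct_add,
      dotProduct_neg] <;> ring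

lemma ker_proj_le_center : (proj K m).ker ≤ Subgroup.center (Heisenberg K m) := by
  intro a ha
  rw [mem_ker_proj] at ha
  rw [Subgroup.mem_center_iff]
  intro b
  ext <;> simp [ha.1, ha.2] <;> ring

lemma center_xy {a : Heisenberg K 1} (ha : a ∈ Subgroup.center (Heisenberg K 1)) :
    a.x = 0 ∧ a.y = 0 := by
  rw [Subgroup.mem_center_iff] at ha
  constructor
  · funext i
    have h := congrArg Heisenberg.z (ha ⟨0, fun _ => 1, 0⟩)
    simp [dotProduct, Fin.sum_univ_one] at h
    rw [Subsingleton.elim i 0]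
    simpa using h
  · funext i
    have h := congrArg Heisenberg.z (ha ⟨fun _ => 1, 0, 0⟩)
    simp [dotProduct, Fin.sum_univ_one] at h
    rw [Subsingleton.elim i 0]
    simpa using h

/-- The central embedding `K → H(K)` as a monoid hom. -/
def zhom (K : Type*) [Field K] (m : ℕ) : Multiplicative K →* Heisenberg K m where
  toFun t := ⟨0, 0, t.toAdd⟩
  map_one' := rfl
  map_mul' s t := by ext <;> simp

/-- Heisenberg as a product type, for counting. -/
def equivProd (K : Type*) (m : ℕ) : Heisenberg K m ≃ ((Fin m → K) × (Fin m → K) × K) where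
  toFun a := (a.x, a.y, a.z)
  invFun p := ⟨p.1, p.2.1, p.2.2⟩
  left_inv a := rfl
  right_inv p := rfl

/-- A ring isomorphism of fields induces an isomorphism of Heisenberg groups. -/
def mapRingEquiv {K K' : Type*} [Field K] [Field K'] {m : ℕ} (σ : K ≃+* K') :
    Heisenberg K m ≃* Heisenberg K' m where
  toFun a := ⟨fun i => σ (a.x i), fun i => σ (a.y i), σ a.z⟩
  invFun a := ⟨fun i => σ.symm (a.x i), fun i => σ.symm (a.y i), σ.symm a.z⟩
  left_inv a := by refine Heisenberg.ext' (funext fun i => ?_) (funext fun i => ?_) ?_ <;> simp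
  right_inv a := by refine Heisenberg.ext' (funext fun i => ?_) (funext fun i => ?_) ?_ <;> simp
  map_mul' a b := by
    refine Heisenberg.ext' (funext fun i => ?_) (funext fun i => ?_) ?_
    · simp
    · simp
    · simp [dotProduct, map_sum]

end Heisenberg

end Aux

/-- Let `p` be an odd prime and `n, d` integers with `2d+2 ≤ n ≤ 3d` such
that no integer `i` with `n-2d ≤ i < d` divides `d`.  Let `H = H_1(𝔽_{p^d})` and let `N` be
a subgroup of `Z(H)` of index `p^n` in `H`.  If `F` is a finite field of characteristic `p`,
`m ≥ 1`, and `H_m(F)` surjects onto `H/N`, then `m = 1` and `|F| = p^d`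
(so `H_m(F) ≅ H`). -/
theorem heisenberg_quotient_indigenous
    (p n d : ℕ) [Fact p.Prime] (hp : Odd p)
    (h1 : 2 * d + 2 ≤ n) (h2 : n ≤ 3 * d)
    (h3 : ∀ i : ℕ, n - 2 * d ≤ i → i < d → ¬ i ∣ d)
    (N : Subgroup (Heisenberg (GaloisField p d) 1)) [N.Normal]
    (hNc : N ≤ Subgroup.center (Heisenberg (GaloisField p d) 1))
    (hNi : N.index = p ^ n)
    (F : Type) [Field F] [Fintype F] [CharP F p] (m : ℕ) (hm : 1 ≤ m)
    (f : Heisenberg F m →* Heisenberg (GaloisField p d) 1 ⧸ N)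
    (hf : Function.Surjective f) :
    m = 1 ∧ Fintype.card F = p ^ d ∧
      Nonempty (Heisenberg F m ≃* Heisenberg (GaloisField p d) 1) := by
    classical
  have hp1 : 2 ≤ p := (Fact.out : p.Prime).two_le
  have hd2 : 2 ≤ d := by omega
  have hd0 : d ≠ 0 := by omega
  set K := GaloisField p d with hKdef
  have hK : Nat.card K = p ^ d := GaloisField.card p d hd0
  obtain ⟨e', -, hFcard⟩ := FiniteField.card F p
  set e : ℕ := (e' : ℕ) with he
  have he0 : 0 < e := e'.2
  have hFc : Nat.card F = p ^ e := by rw [Nat.card_eq_fintype_card, hFcard]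
  have hfin1 : Nat.card (Fin 1 → K) = p ^ d := by
    rw [Nat.card_fun, hK, Nat.card_eq_fintype_card, Fintype.card_fin, pow_one]
  have hH : Nat.card (Heisenberg K 1) = p ^ (3 * d) := by
    rw [Nat.card_congr (Heisenberg.equivProd K 1), Nat.card_prod, Nat.card_prod, hfin1, hK,
      ← pow_add, ← pow_add]
    congr 1
    omega
  have hMK : Nat.card (Multiplicative ((Fin 1 → K) × (Fin 1 → K))) = p ^ (2 * d) := by
    rw [Nat.card_congr Multiplicative.toAdd, Nat.card_prod, hfin1, ← pow_add]
    congr 1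
    omega
  have hNxy : ∀ h ∈ N, h.x = 0 ∧ h.y = 0 := fun h hh => Heisenberg.center_xy (hNc hh)
  have hNker : ∀ h ∈ N, Heisenberg.proj K 1 h = 1 := by
    intro h hh
    have := Heisenberg.mem_ker_proj.mpr (hNxy h hh)
    rwa [MonoidHom.mem_ker] at this
  set πQ : (Heisenberg K 1 ⧸ N) →* Multiplicative ((Fin 1 → K) × (Fin 1 → K)) :=
    QuotientGroup.lift N (Heisenberg.proj K 1) hNker with hπQdef
  have hπQmk : ∀ h : Heisenberg K 1, πQ (QuotientGroup.mk h) = Heisenberg.proj K 1 h :=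
    fun h => rfl
  have hπQ : Function.Surjective πQ := by
    intro t
    obtain ⟨h, rfl⟩ := Heisenberg.proj_surjective K 1 t
    exact ⟨QuotientGroup.mk h, rfl⟩
  set g : Heisenberg F m →* Multiplicative ((Fin 1 → K) × (Fin 1 → K)) := πQ.comp f with hgdef
  have hg : Function.Surjective g := hπQ.comp hf
  have hker : g.ker = (Heisenberg.proj F m).ker := by
    apply le_antisymm
    · intro a ha
      rw [MonoidHom.mem_ker] at ha
      rw [Heisenberg.mem_ker_proj]
      by_contra hcon
      have hcent : ∀ q : Heisenberg K 1 ⧸ N, Commute (f a) q := by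
        intro q
        obtain ⟨h', hh'⟩ := QuotientGroup.mk_surjective (f a)
        obtain ⟨k, rfl⟩ := QuotientGroup.mk_surjective q
        have hk : h' ∈ (Heisenberg.proj K 1).ker := by
          rw [MonoidHom.mem_ker, ← hπQmk h', hh']
          exact ha
        have hc := Subgroup.mem_center_iff.mp (Heisenberg.ker_proj_le_center hk)
        rw [← hh']
        show _ * _ = _ * _
        rw [← QuotientGroup.mk_mul, ← QuotientGroup.mk_mul, hc k]
      have hzf : ∀ t : F, f ⟨0, 0, t⟩ = 1 := by
        have hcomm : ∀ b : Heisenberg F m, f ⁅a, b⁆ = 1 := by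
          intro b
          rw [map_commutatorElement]
          exact commutatorElement_eq_one_iff_commute.mpr (hcent (f b))
        intro t
        rcases not_and_or.mp hcon with hx | hy
        · obtain ⟨j, hj⟩ := Function.ne_iff.mp hx
          have hj' : a.x j ≠ 0 := by simpa using hj
          have h1 := hcomm ⟨0, Pi.single j ((a.x j)⁻¹ * t), 0⟩
          rw [Heisenberg.commutator_eq] at h1
          simpa [dotProduct_single, mul_inv_cancel_left₀ hj'] using h1
        · obtain ⟨j, hj⟩ := Function.ne_iff.mp hy
          have hj' : a.y j ≠ 0 := by simpa using hj
          have h1 := hcomm ⟨Pi.single j (-(t * (a.y j)⁻¹)), 0, 0⟩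
          rw [Heisenberg.commutator_eq] at h1
          simpa [single_dotProduct, inv_mul_cancel_right₀ hj'] using h1
      have hZN : ∀ t : K, (⟨0, 0, t⟩ : Heisenberg K 1) ∈ N := by
        intro t
        obtain ⟨g₁, hg₁⟩ := hf (QuotientGroup.mk' N ⟨fun _ => t, 0, 0⟩)
        obtain ⟨g₂, hg₂⟩ := hf (QuotientGroup.mk' N ⟨0, fun _ => 1, 0⟩)
        have key : QuotientGroup.mk' N (⟨0, 0, t⟩ : Heisenberg K 1) = 1 := by
          have hc : (⟨0, 0, t⟩ : Heisenberg K 1)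
              = ⁅(⟨fun _ => t, 0, 0⟩ : Heisenberg K 1), ⟨0, fun _ => 1, 0⟩⁆ := by
            rw [Heisenberg.commutator_eq]
            refine Heisenberg.ext' ?_ ?_ ?_ <;>
              simp [dotProduct, Fin.sum_univ_one]
          rw [hc, map_commutatorElement, ← hg₁, ← hg₂, ← map_commutatorElement,
            Heisenberg.commutator_eq]
          exact hzf _
        rwa [← QuotientGroup.ker_mk' N, MonoidHom.mem_ker]
      have hZleN : (Heisenberg.proj K 1).ker ≤ N := by
        intro h hh
        rw [Heisenberg.mem_ker_proj] at hh
        have hh2 : h = ⟨0, 0, h.z⟩ := Heisenberg.ext' hh.1 hh.2 rfl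
        rw [hh2]
        exact hZN h.z
      have hidx := Subgroup.index_dvd_of_le hZleN
      rw [hNi, Subgroup.index_ker,
        MonoidHom.range_eq_top.mpr (Heisenberg.proj_surjective K 1), Subgroup.card_top,
        hMK] at hidx
      have hle2 : p ^ n ≤ p ^ (2 * d) := Nat.le_of_dvd (pow_pos (by omega) _) hidx
      have := (Nat.pow_le_pow_iff_right hp1).mp hle2
      omega
    · intro a ha
      rw [Heisenberg.mem_ker_proj] at ha
      rw [MonoidHom.mem_ker]
      have ha' : a = ⁅(⟨fun _ => a.z, 0, 0⟩ : Heisenberg F m), ⟨0, Pi.single ⟨0, hm⟩ 1, 0⟩⁆ := by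
        rw [Heisenberg.commutator_eq]
        refine Heisenberg.ext' ha.1 ha.2 ?_
        simp [dotProduct_single]
      rw [ha', map_commutatorElement]
      exact commutatorElement_eq_one_iff_commute.mpr (mul_comm _ _)
  have hMF : Nat.card (Multiplicative ((Fin m → F) × (Fin m → F))) = p ^ (e * m + e * m) := by
    have h1 : Nat.card (Fin m → F) = p ^ (e * m) := by
      rw [Nat.card_fun, hFc, Nat.card_eq_fintype_card, Fintype.card_fin, ← pow_mul]
    rw [Nat.card_congr Multiplicative.toAdd, Nat.card_prod, h1, ← pow_add]
  have hcard1 : Nat.card (Heisenberg F m ⧸ g.ker) = p ^ (2 * d) := by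
    rw [Nat.card_congr (QuotientGroup.quotientKerEquivOfSurjective g hg).toEquiv]
    exact hMK
  have hcard2 : Nat.card (Heisenberg F m ⧸ (Heisenberg.proj F m).ker)
      = p ^ (e * m + e * m) := by
    rw [Nat.card_congr
      (QuotientGroup.quotientKerEquivOfSurjective _ (Heisenberg.proj_surjective F m)).toEquiv]
    exact hMF
  rw [hker, hcard2] at hcard1
  have hme : e * m = d := by
    have h4 := Nat.pow_right_injective hp1 hcard1
    have h5 : 2 * (e * m) = 2 * d := by rw [two_mul]; exact h4
    exact Nat.eq_of_mul_eq_mul_left (by omega) h5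
  have hcardN : Nat.card N = p ^ (3 * d - n) := by
    have h := Subgroup.card_mul_index N
    rw [hNi, hH] at h
    have hpow : p ^ (3 * d) = p ^ (3 * d - n) * p ^ n := by rw [← pow_add]; congr 1; omega
    rw [hpow] at h
    exact Nat.eq_of_mul_eq_mul_right (pow_pos (by omega) _) h
  set ι : Multiplicative K →* Heisenberg K 1 ⧸ N :=
    (QuotientGroup.mk' N).comp (Heisenberg.zhom K 1) with hιdef
  have hmem : ∀ w : Multiplicative K,
      (w ∈ ι.ker ↔ (⟨0, 0, w.toAdd⟩ : Heisenberg K 1) ∈ N) := by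
    intro w
    rw [MonoidHom.mem_ker]
    show QuotientGroup.mk' N (⟨0, 0, w.toAdd⟩ : Heisenberg K 1) = 1 ↔ _
    rw [← MonoidHom.mem_ker, QuotientGroup.ker_mk']
  have hkerι : Nat.card ι.ker = p ^ (3 * d - n) := by
    rw [← hcardN]
    refine Nat.card_congr ⟨fun t => ⟨⟨0, 0, Multiplicative.toAdd t.1⟩, (hmem t.1).mp t.2⟩,
      fun h => ⟨Multiplicative.ofAdd h.1.z, (hmem _).mpr ?_⟩, fun t => ?_, fun h => ?_⟩
    · have hxy := hNxy h.1 h.2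
      have h7 : (⟨0, 0, Multiplicative.toAdd (Multiplicative.ofAdd h.1.z)⟩ : Heisenberg K 1)
          = h.1 := Heisenberg.ext' hxy.1.symm hxy.2.symm rfl
      rw [h7]
      exact h.2
    · apply Subtype.ext
      simp
    · apply Subtype.ext
      have hxy := hNxy h.1 h.2
      exact Heisenberg.ext' hxy.1.symm hxy.2.symm rfl
  have hrangeι : Nat.card ι.range = p ^ (n - 2 * d) := by
    have h := Subgroup.card_mul_index ι.ker
    rw [Subgroup.index_ker, hkerι, Nat.card_congr Multiplicative.toAdd, hK] at h
    have hpow : p ^ d = p ^ (3 * d - n) * p ^ (n - 2 * d) := by rw [← pow_add]; congr 1; omega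
    rw [hpow] at h
    exact Nat.eq_of_mul_eq_mul_left (pow_pos (by omega) _) h
  have hsub : (ι.range : Set (Heisenberg K 1 ⧸ N)) ⊆ Set.range (fun t : F => f ⟨0, 0, t⟩) := by
    rintro q ⟨w, rfl⟩
    obtain ⟨g₁, hg₁⟩ := hf (QuotientGroup.mk' N ⟨fun _ => w.toAdd, 0, 0⟩)
    obtain ⟨g₂, hg₂⟩ := hf (QuotientGroup.mk' N ⟨0, fun _ => 1, 0⟩)
    refine ⟨(⁅g₁, g₂⁆).z, ?_⟩
    have h5 : (⟨0, 0, (⁅g₁, g₂⁆).z⟩ : Heisenberg F m) = ⁅g₁, g₂⁆ := by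
      rw [Heisenberg.commutator_eq]
    show f _ = ι w
    rw [h5, map_commutatorElement, hg₁, hg₂, ← map_commutatorElement]
    show QuotientGroup.mk' N _ = QuotientGroup.mk' N _
    congr 1
    rw [Heisenberg.commutator_eq]
    refine Heisenberg.ext' rfl rfl ?_
    simp [dotProduct, Fin.sum_univ_one, Heisenberg.zhom]
  have hle : p ^ (n - 2 * d) ≤ p ^ e := by
    rw [← hrangeι, ← hFc]
    calc Nat.card ι.range ≤ Nat.card (Set.range fun t : F => f ⟨0, 0, t⟩) :=
          Nat.card_mono (Set.finite_range _) hsub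
      _ ≤ Nat.card F :=
          Nat.card_le_card_of_surjective _ Set.rangeFactorization_surjective
  have hge : n - 2 * d ≤ e := (Nat.pow_le_pow_iff_right hp1).mp hle
  have hdvd : e ∣ d := ⟨m, hme.symm⟩
  have hele : e ≤ d := Nat.le_of_dvd (by omega) hdvd
  have hed : e = d := by
    by_contra hne
    exact h3 e (by omega) (by omega) hdvd
  have hm1 : m = 1 := by
    rw [hed] at hme
    have h6 : d * m = d * 1 := by rw [mul_one]; exact hme
    exact Nat.eq_of_mul_eq_mul_left (by omega) h6
  subst hm1
  refine ⟨rfl, by rw [hFcard, hed], ?_⟩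
  letI : Fintype K := Fintype.ofFinite K
  have hcards : Fintype.card F = Fintype.card K := by
    rw [hFcard, hed, ← Nat.card_eq_fintype_card, hK]
  exact ⟨Heisenberg.mapRingEquiv (FiniteField.ringEquivOfCardEq hcards)⟩
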